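/- arXiv:cs/0609161 — 2 statements merged into one kernel-verified Lean document; each statement's English description precedes it below -/
import Mathlib

section
/- The order bound δ^m_i = min{ν^m_j : j > i} for Λ^m satisfies: δ^m_i = 2 if i ≤ c_m − g_m; δ^m_i = i − g_m + 2 if i > 2c_m − g_m − 2; and if c_m − g_m < i ≤ 2c_m − g_m − 2, then δ^m_i = 2q^{m−α} + 2(i + 1 + g_m − c_m)/q^{2α−m−1} − 2c_{2m−2α+1}, where α = ⌈log_q(q^m − i − 1 + c_m − g_m)⌉. -/
/-- The Garcia–Stichtenoth tower of Weierstrass semigroups: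
`Λ¹ = ℕ₀`, `Λᵐ = q·Λ^{m-1} ∪ {i : i ≥ qᵐ - q^⌊(m+1)/2⌋}` for `m ≥ 2`. -/
def GSsemigroup (q : ℕ) : ℕ → Set ℕ
  | 0 => Set.univ
  | 1 => Set.univ
  | (m + 2) => (fun x => q * x) '' GSsemigroup q (m + 1) ∪
      {i : ℕ | q ^ (m + 2) - q ^ ((m + 3) / 2) ≤ i}

/-- `c_m = q^m - q^⌊(m+1)/2⌋`, the conductor of `Λ^m`. -/
def gsC (q m : ℕ) : ℕ := q ^ m - q ^ ((m + 1) / 2)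

/-- `g_m = (q^⌊(m+1)/2⌋ - 1)(q^⌈(m-1)/2⌉ - 1)`, the genus of `Λ^m`
(note `⌈(m-1)/2⌉ = ⌊m/2⌋` for `m ≥ 1`). -/
def gsG (q m : ℕ) : ℕ := (q ^ ((m + 1) / 2) - 1) * (q ^ (m / 2) - 1)

/-- `A_i = {j : q^{2i-1} - q^i ≤ j ≤ q^{2i-1} - q^{i-1} - 1}`. -/
def gsA (q i : ℕ) : Set ℕ :=
  {j : ℕ | q ^ (2 * i - 1) - q ^ i ≤ j ∧ j ≤ q ^ (2 * i - 1) - q ^ (i - 1) - 1}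

/-- The enumeration `λ` of `Λ^m`: the increasing bijection `ℕ₀ → Λ^m`. -/
noncomputable def gsEnum (q m : ℕ) : ℕ → ℕ := Nat.nth (fun n => n ∈ GSsemigroup q m)

/-- `ν_i = #{j : λ_i - λ_j ∈ Λ^m}` (the subtraction being in `ℤ`,
i.e. `∃ a ∈ Λ^m, λ_j + a = λ_i`). -/
noncomputable def gsNu (q m i : ℕ) : ℕ :=
  Set.ncard {j : ℕ | ∃ a ∈ GSsemigroup q m, gsEnum q m j + a = gsEnum q m i}

/-- The order (Feng–Rao) bound `δ_i = min {ν_j : j > i}`. -/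
noncomputable def gsDelta (q m i : ℕ) : ℕ := sInf (gsNu q m '' {j : ℕ | i < j})

/-- The semigroup floor `⌊k⌋_{Λ^m}`: the largest element of `Λ^m` not exceeding `k`. -/
noncomputable def gsFloor (q m k : ℕ) : ℕ := sSup {x ∈ GSsemigroup q m | x ≤ k}

/-- `λ⁻¹(x)` for `x ∈ Λ^m`: the number of elements of `Λ^m` below `x`. -/
noncomputable def gsLinv (q m x : ℕ) : ℕ := Set.ncard {y ∈ GSsemigroup q m | y < x}

attribute [local instance] Classical.propDecidable

namespace GSaux

lemma mem_of_c_le {q m x : ℕ} (h : gsC q m ≤ x) : x ∈ GSsemigroup q m := by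
  match m with
  | 0 => trivial
  | 1 => trivial
  | (m+2) => exact Or.inr h

lemma zero_mem (q : ℕ) : ∀ m : ℕ, 0 ∈ GSsemigroup q m
  | 0 => trivial
  | 1 => trivial
  | (m+2) => Or.inl ⟨0, zero_mem q (m+1), mul_zero q⟩

lemma S_infinite (q m : ℕ) : {n | n ∈ GSsemigroup q m}.Infinite :=
  Set.Infinite.mono (fun _ hx => mem_of_c_le hx) (Set.Ici_infinite (gsC q m))

/-- Structure lemma: small elements are divisible by high powers of q. -/
lemma SL {q : ℕ} (hq : 2 ≤ q) :
    ∀ m k x : ℕ, x ∈ GSsemigroup q (m+1) → x + q ^ ((m+k+2)/2) < q ^ (m+1) →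
      q ^ (k+1) ∣ x := by
  intro m
  induction m with
  | zero =>
    intro k x _ hlt
    exfalso
    have h1 : (1:ℕ) ≤ (k+2)/2 := by omega
    have : q ^ 1 ≤ q ^ ((k+2)/2) := Nat.pow_le_pow_right (by omega) h1
    simp [pow_one] at this hlt
    omega
  | succ m ih =>
    intro k x hx hlt
    rcases hx with ⟨y, hy, rfl⟩ | hge
    · -- x = q * y
      rcases k with _ | k'
      · exact ⟨y, by ring⟩
      · have hexp : (m + 1 + (k'+1) + 2)/2 = (m + k' + 2)/2 + 1 := by omega
        rw [hexp] at hlt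
        have hy2 : y + q ^ ((m + k' + 2)/2) < q ^ (m+1) := by
          have hq0 : 0 < q := by omega
          have : q * (y + q ^ ((m + k' + 2)/2)) < q * q ^ (m+1) := by
            calc q * (y + q ^ ((m + k' + 2)/2))
                = q * y + q ^ ((m + k' + 2)/2 + 1) := by ring
              _ < q ^ (m+2) := hlt
              _ = q * q ^ (m+1) := by ring
          exact Nat.lt_of_mul_lt_mul_left this
        obtain ⟨z, hz⟩ := ih k' y hy hy2
        exact ⟨z, by rw [hz]; ring⟩
    · -- x ≥ conductor: contradiction
      exfalso
      have h1 : (m+3)/2 ≤ m+2 := by omega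
      have h2 : q ^ ((m+3)/2) ≤ q ^ (m+2) := Nat.pow_le_pow_right (by omega) h1
      have h3 : q ^ (m+2) ≤ x + q ^ ((m+3)/2) := by
        have := hge
        simp only [Set.mem_setOf_eq] at this
        omega
      have h4 : q ^ ((m+3)/2) ≤ q ^ ((m+1+k+2)/2) := Nat.pow_le_pow_right (by omega) (by omega)
      have h5 : q ^ (m+1+1) = q ^ (m+2) := by rw [show m+1+1 = m+2 from rfl]
      omega

/-- `c + 1 = g + q^(m/2)` -/
lemma cg_identity {q : ℕ} (hq : 2 ≤ q) (m : ℕ) :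
    gsC q m + 1 = gsG q m + q ^ (m/2) := by
  have hsum : m/2 + (m+1)/2 = m := by omega
  set a := q ^ (m/2) with ha
  set b := q ^ ((m+1)/2) with hb
  have hab : q ^ m = a * b := by rw [ha, hb, ← pow_add, hsum]
  have ha1 : 1 ≤ a := Nat.one_le_pow _ _ (by omega)
  have hb1 : 1 ≤ b := Nat.one_le_pow _ _ (by omega)
  have hble : b ≤ a * b := Nat.le_mul_of_pos_left b (by omega)
  unfold gsC gsG
  rw [← ha, ← hb, hab]
  zify [ha1, hb1, hble]
  ring

lemma q_dvd_c {q : ℕ} (m : ℕ) (hm : 1 ≤ m) : q ∣ gsC q m := by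
  unfold gsC
  exact Nat.dvd_sub (dvd_pow_self q (by omega)) (dvd_pow_self q (by omega))

lemma c_zero_or_two {q : ℕ} (hq : 2 ≤ q) (m : ℕ) (hm : 1 ≤ m) :
    (m = 1 ∧ gsC q m = 0 ∧ gsG q m = 0) ∨ (2 ≤ m ∧ 2 ≤ gsC q m) := by
  rcases Nat.lt_or_ge m 2 with h | h
  · left
    have hm1 : m = 1 := by omega
    subst hm1
    constructor
    · rfl
    constructor
    · simp [gsC]
    · simp [gsG]
  · right
    refine ⟨h, ?_⟩
    have h2 : q ^ ((m+1)/2) ≤ q ^ (m-1) := Nat.pow_le_pow_right (by omega) (by omega)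
    have h3 : 2 * q ^ (m-1) ≤ q ^ m := by
      calc 2 * q ^ (m-1) ≤ q * q ^ (m-1) := Nat.mul_le_mul_right _ hq
        _ = q ^ m := by rw [← pow_succ']; congr 1; omega
    have h5 : 2 ≤ q ^ (m-1) := by
      calc 2 ≤ q := hq
        _ = q ^ 1 := (pow_one q).symm
        _ ≤ q ^ (m-1) := Nat.pow_le_pow_right (by omega) (by omega)
    unfold gsC
    omega

/-- counting function -/
noncomputable def F (q m n : ℕ) : ℕ := Nat.count (fun x => x ∈ GSsemigroup q m) n

lemma F_eq_card (q m n : ℕ) :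
    F q m n = ((Finset.range n).filter (fun x => x ∈ GSsemigroup q m)).card :=
  Nat.count_eq_card_filter_range _ n

lemma F_succ_mem {q m n : ℕ} (h : n ∈ GSsemigroup q m) : F q m (n+1) = F q m n + 1 := by
  unfold F
  rw [Nat.count_succ]
  simp [h]

/-- KC2 -/
lemma F_c_add (q m : ℕ) : ∀ t : ℕ, F q m (gsC q m + t) = F q m (gsC q m) + t := by
  intro t
  induction t with
  | zero => rfl
  | succ t ih =>
    have : gsC q m + (t+1) = (gsC q m + t) + 1 := by omega
    rw [this, F_succ_mem (mem_of_c_le (by omega)), ih]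
    omega

end GSaux

namespace GSaux

/-- Recursion for counting: for `d+1 ≤ c_{m+1}`, `F (m+1) (d+1) = F m (d/q + 1)`. -/
lemma F_rec {q : ℕ} (hq : 2 ≤ q) {m : ℕ} (hm : 1 ≤ m) {d : ℕ}
    (hd : d + 1 ≤ gsC q (m+1)) : F q (m+1) (d+1) = F q m (d/q + 1) := by
  obtain ⟨m', rfl⟩ : ∃ m', m = m' + 1 := ⟨m - 1, by omega⟩
  rw [F_eq_card, F_eq_card]
  symm
  apply Finset.card_bij' (fun y _ => q * y) (fun x _ => x / q)
  · -- maps into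
    intro y hy
    simp only [Finset.mem_filter, Finset.mem_range] at hy ⊢
    obtain ⟨hy1, hy2⟩ := hy
    constructor
    · have h1 : y ≤ d / q := by omega
      have h2 : q * y ≤ q * (d / q) := Nat.mul_le_mul_left q h1
      have h3 : q * (d / q) ≤ d := Nat.mul_div_le d q
      omega
    · exact Or.inl ⟨y, hy2, rfl⟩
  · -- reverse maps into
    intro x hx
    simp only [Finset.mem_filter, Finset.mem_range] at hx ⊢
    obtain ⟨hx1, hx2⟩ := hx
    rcases hx2 with ⟨y, hy, rfl⟩ | hge
    · have hbeta : (fun x => q * x) y = q * y := rfl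
      rw [hbeta] at hx1 ⊢
      rw [Nat.mul_div_cancel_left y (by omega : 0 < q)]
      refine ⟨?_, hy⟩
      have h1 : y ≤ d / q := (Nat.le_div_iff_mul_le (by omega : 0 < q)).mpr (by rw [Nat.mul_comm]; omega)
      omega
    · exfalso
      simp only [Set.mem_setOf_eq] at hge
      have heq : gsC q (m'+1+1) = q ^ (m'+2) - q ^ ((m'+3)/2) := rfl
      omega
  · -- left inverse
    intro y hy
    exact Nat.mul_div_cancel_left y (by omega : 0 < q)
  · -- right inverse
    intro x hx
    simp only [Finset.mem_filter, Finset.mem_range] at hx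
    rcases hx.2 with ⟨y, _, rfl⟩ | hge
    · have hbeta : (fun x => q * x) y = q * y := rfl
      rw [hbeta, Nat.mul_div_cancel_left y (by omega : 0 < q)]
    · exfalso
      simp only [Set.mem_setOf_eq] at hge
      have heq : gsC q (m'+1+1) = q ^ (m'+2) - q ^ ((m'+3)/2) := rfl
      omega

/-- genus count: `F m (c_m) + g_m = c_m` for `m ≥ 1`. -/
lemma F_c (q : ℕ) (hq : 2 ≤ q) : ∀ m : ℕ, 1 ≤ m → F q m (gsC q m) + gsG q m = gsC q m := by
  intro m
  induction m with
  | zero => omega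
  | succ m ih =>
    intro _
    rcases Nat.lt_or_ge m 1 with h | hm1
    · -- m+1 = 1
      have : m = 0 := by omega
      subst this
      have hc : gsC q 1 = 0 := by simp [gsC]
      have hg : gsG q 1 = 0 := by simp [gsG]
      rw [hc, hg]
      simp [F, Nat.count_zero]
    · -- m ≥ 1
      have hcpos : 2 ≤ gsC q (m+1) := by
        rcases c_zero_or_two hq (m+1) (by omega) with ⟨h1, _, _⟩ | ⟨_, h2⟩
        · omega
        · exact h2
      -- write c_{m+1} = d + 1
      have hdvd : q ∣ gsC q (m+1) := q_dvd_c (m+1) (by omega)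
      obtain ⟨w, hw⟩ := hdvd
      have hrec := F_rec hq hm1 (show (gsC q (m+1) - 1) + 1 ≤ gsC q (m+1) by omega)
      -- (c-1)/q + 1 = c/q = w
      have hw1 : 1 ≤ w := by
        rcases Nat.eq_zero_or_pos w with h | h
        · subst h; omega
        · exact h
      have hdiv : (gsC q (m+1) - 1) / q + 1 = w := by
        rw [hw]
        have hsplit : q * w - 1 = q - 1 + q * (w-1) := by
          cases w with
          | zero => omega
          | succ w' => simp [Nat.mul_succ]; omega
        rw [hsplit, Nat.add_mul_div_left _ _ (by omega : 0 < q)]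
        have hz : (q - 1) / q = 0 := Nat.div_eq_of_lt (by omega)
        omega
      have hc1 : gsC q (m+1) - 1 + 1 = gsC q (m+1) := by omega
      rw [hc1] at hrec
      rw [hdiv] at hrec
      -- now express w = c_m + t with t = q^((m+1)/2) - q^(m/2)
      set a := q ^ (m/2) with ha
      set b := q ^ ((m+1)/2) with hb
      have hsum : m/2 + (m+1)/2 = m := by omega
      have hab : q ^ m = a * b := by rw [ha, hb, ← pow_add, hsum]
      have ha1 : 1 ≤ a := Nat.one_le_pow _ _ (by omega)
      have hb1 : 1 ≤ b := Nat.one_le_pow _ _ (by omega)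
      have hable : a ≤ b := Nat.pow_le_pow_right (by omega) (by omega)
      -- c_{m+1} = q^{m+1} - q^{(m+2)/2} = q*a*b - q*a
      have hcm1 : gsC q (m+1) = q * (a*b) - q * a := by
        unfold gsC
        congr 1
        · rw [pow_succ, hab]; ring
        · rw [ha, ← pow_succ']
          congr 1
          omega
      -- so w = a*b - a
      have hwval : w = a * b - a := by
        have hqpos : 0 < q := by omega
        have h1 : q * w = q * (a*b - a) := by
          rw [← hw, hcm1, Nat.mul_sub]
        exact Nat.eq_of_mul_eq_mul_left hqpos h1
      -- c_m = a*b - b ; w = c_m + (b - a)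
      have hcm : gsC q m = a * b - b := by
        unfold gsC
        rw [hab, ← hb]
      have hble : b ≤ a * b := Nat.le_mul_of_pos_left b (by omega)
      have hwc : w = gsC q m + (b - a) := by
        rw [hwval, hcm]
        omega
      rw [hwc, F_c_add] at hrec
      have ihm := ih hm1
      -- genus values
      have hgm : gsG q m + a + b = a * b + 1 := by
        unfold gsG
        rw [← ha, ← hb]
        zify [ha1, hb1]
        ring
      have hgm1 : gsG q (m+1) + q * a + b = q * (a * b) + 1 := by
        unfold gsG
        have e1 : (m+1+1)/2 = m/2 + 1 := by omega
        have e2 : (m+1)/2 = (m+1)/2 := rfl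
        rw [e1]
        have e3 : q ^ (m/2 + 1) = q * a := by rw [ha, ← pow_succ']
        rw [e3, ← hb]
        have hqa1 : 1 ≤ q * a := by nlinarith
        zify [hqa1, hb1]
        ring
      have hcm1' : gsC q (m+1) + q * a = q * (a*b) := by
        rw [hcm1]
        have : q * a ≤ q * (a*b) := by
          apply Nat.mul_le_mul_left
          exact Nat.le_mul_of_pos_right a (by omega)
        omega
      have hcm' : gsC q m + b = a * b := by rw [hcm]; omega
      omega

/-- KC: full counting above the conductor -/
lemma F_c_full (q : ℕ) (hq : 2 ≤ q) (m : ℕ) (hm : 1 ≤ m) (t : ℕ) :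
    F q m (gsC q m + t) + gsG q m = gsC q m + t := by
  rw [F_c_add]
  have := F_c q hq m hm
  omega

/-- the arithmetic identity (dagger) -/
lemma dag {q : ℕ} (hq : 2 ≤ q) :
    ∀ e u d : ℕ, q ^ (u+e) + d < q ^ (2*u+e+1) → q ^ (2*u+e+1) ≤ q ^ (u+e+1) + d →
    F q (2*u+e+1) (d+1) + gsC q (2*u+1) = q ^ u + d / q ^ e := by
  intro e
  induction e with
  | zero =>
    intro u d h1 h2
    simp only [Nat.add_zero] at h1 h2 ⊢
    have hcLe : gsC q (2*u+1) ≤ d := by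
      have : gsC q (2*u+1) = q ^ (2*u+1) - q ^ (u+1) := by
        unfold gsC
        congr 2
        omega
      omega
    obtain ⟨t, ht⟩ : ∃ t, d = gsC q (2*u+1) + t := ⟨d - gsC q (2*u+1), by omega⟩
    have hKC := F_c_full q hq (2*u+1) (by omega) (t+1)
    have hcg := cg_identity hq (2*u+1)
    have hu : (2*u+1)/2 = u := by omega
    rw [hu] at hcg
    have : d + 1 = gsC q (2*u+1) + (t+1) := by omega
    rw [this, Nat.pow_zero, Nat.div_one]
    omega
  | succ e ih =>
    intro u d h1 h2
    have hqpos : 0 < q := by omega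
    -- exponent bookkeeping
    have hm : 2*u+(e+1)+1 = (2*u+e+1)+1 := by ring
    rw [hm]
    -- d + 1 ≤ c_{m} where m = 2u+e+2
    have hh : (2*u+e+1+1+1)/2 ≤ u+e+1 := by omega
    have hpow_h : q ^ ((2*u+e+1+1+1)/2) ≤ q ^ (u+e+1) := Nat.pow_le_pow_right (by omega) hh
    have hExp : u + (e+1) = u + e + 1 := by ring
    rw [hExp] at h1
    have hd1 : d + 1 ≤ gsC q ((2*u+e+1)+1) := by
      unfold gsC
      have h3 : q ^ (2*u+e+1+1) = q ^ (2*u+(e+1)+1) := by rw [show 2*u+e+1+1 = 2*u+(e+1)+1 by ring]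
      omega
    rw [F_rec hq (by omega : 1 ≤ 2*u+e+1) hd1]
    -- new hypotheses for d/q
    have hA : q ^ (u+e) + d/q < q ^ (2*u+e+1) := by
      have hmul : (q ^ (u+e) + d/q) * q < q ^ (2*u+e+1) * q := by
        have hdq : (d/q) * q ≤ d := Nat.div_mul_le_self d q
        calc (q ^ (u+e) + d/q) * q = q ^ (u+e) * q + (d/q) * q := by ring
          _ ≤ q ^ (u+e+1) + d := by rw [← pow_succ]; omega
          _ < q ^ (2*u+(e+1)+1) := h1
          _ = q ^ (2*u+e+1) * q := by rw [← pow_succ]; ring_nf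
      exact Nat.lt_of_mul_lt_mul_right hmul
    have hB : q ^ (2*u+e+1) ≤ q ^ (u+e+1) + d/q := by
      by_contra hcon
      push_neg at hcon
      have : q ^ (u+e+1) + d/q + 1 ≤ q ^ (2*u+e+1) := by omega
      have hmul : (q ^ (u+e+1) + d/q + 1) * q ≤ q ^ (2*u+e+1) * q :=
        Nat.mul_le_mul_right q this
      have hdlt : d < (d/q + 1) * q := (Nat.div_lt_iff_lt_mul hqpos).mp (Nat.lt_succ_self _)
      have e1 : q ^ (u+e+1) * q = q ^ (u+(e+1)+1) := by rw [← pow_succ]; ring_nf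
      have e2 : q ^ (2*u+e+1) * q = q ^ (2*u+(e+1)+1) := by rw [← pow_succ]; ring_nf
      have : q ^ (u+(e+1)+1) + d < q ^ (2*u+(e+1)+1) := by nlinarith
      omega
    have := ih u (d/q) hA hB
    rw [this]
    congr 1
    rw [Nat.div_div_eq_div_mul]
    congr 1
    rw [← pow_succ']

end GSaux

namespace GSaux

noncomputable def Nufin (q m l : ℕ) : ℕ :=
  ((Finset.range (l+1)).filter
    (fun a => a ∈ GSsemigroup q m ∧ l - a ∈ GSsemigroup q m)).card

lemma gsEnum_mem (q m j : ℕ) : gsEnum q m j ∈ GSsemigroup q m :=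
  Nat.nth_mem_of_infinite (S_infinite q m) j

lemma gsEnum_count {q m x : ℕ} (hx : x ∈ GSsemigroup q m) :
    gsEnum q m (Nat.count (fun n => n ∈ GSsemigroup q m) x) = x :=
  Nat.nth_count hx

lemma gsEnum_strictMono (q m : ℕ) : StrictMono (gsEnum q m) :=
  Nat.nth_strictMono (S_infinite q m)

/-- bridge: `gsNu` equals the concrete finite count. -/
lemma gsNu_eq (q m i : ℕ) : gsNu q m i = Nufin q m (gsEnum q m i) := by
  have hinf := S_infinite q m
  set l := gsEnum q m i with hl
  have himg : gsEnum q m '' {j : ℕ | ∃ a ∈ GSsemigroup q m, gsEnum q m j + a = gsEnum q m i}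
      = ↑((Finset.range (l+1)).filter
          (fun a => a ∈ GSsemigroup q m ∧ l - a ∈ GSsemigroup q m)) := by
    ext x
    simp only [Set.mem_image, Set.mem_setOf_eq, Finset.coe_filter, Finset.mem_range]
    constructor
    · rintro ⟨j, ⟨a, ha, hja⟩, rfl⟩
      have hmem : gsEnum q m j ∈ GSsemigroup q m := gsEnum_mem q m j
      refine ⟨by omega, hmem, ?_⟩
      have hsub : l - gsEnum q m j = a := by omega
      rw [hsub]; exact ha
    · rintro ⟨hx1, hx2, hx3⟩
      refine ⟨Nat.count (fun n => n ∈ GSsemigroup q m) x, ⟨l - x, hx3, ?_⟩, gsEnum_count hx2⟩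
      rw [gsEnum_count hx2]
      omega
  unfold gsNu Nufin
  rw [← Set.ncard_coe_finset, ← himg]
  exact (Set.ncard_image_of_injective _ (Nat.nth_injective hinf)).symm

lemma two_le_Nufin {q m l : ℕ} (hl1 : 1 ≤ l) (hl : l ∈ GSsemigroup q m) :
    2 ≤ Nufin q m l := by
  have hsub : ({0, l} : Finset ℕ) ⊆ (Finset.range (l+1)).filter
      (fun a => a ∈ GSsemigroup q m ∧ l - a ∈ GSsemigroup q m) := by
    intro a ha
    rcases Finset.mem_insert.mp ha with rfl | ha
    · refine Finset.mem_filter.mpr ⟨Finset.mem_range.mpr (by omega), zero_mem q m, ?_⟩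
      rw [Nat.sub_zero]; exact hl
    · rw [Finset.mem_singleton.mp ha]
      refine Finset.mem_filter.mpr ⟨Finset.mem_range.mpr (by omega), hl, ?_⟩
      rw [Nat.sub_self]; exact zero_mem q m
  calc 2 = ({0, l} : Finset ℕ).card := (Finset.card_pair (by omega)).symm
    _ ≤ _ := Finset.card_le_card hsub

lemma q_dvd_lt_c {q m x : ℕ} (hq : 2 ≤ q) (hm : 1 ≤ m) (hx : x ∈ GSsemigroup q m)
    (hlt : x < gsC q m) : q ∣ x := by
  obtain ⟨m', rfl⟩ : ∃ m', m = m' + 1 := ⟨m - 1, by omega⟩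
  have hc : gsC q (m'+1) = q ^ (m'+1) - q ^ ((m'+2)/2) := rfl
  have hle : q ^ ((m'+2)/2) ≤ q ^ (m'+1) := Nat.pow_le_pow_right (by omega) (by omega)
  have h2 : x + q ^ ((m'+0+2)/2) < q ^ (m'+1) := by
    have : (m'+0+2)/2 = (m'+2)/2 := by omega
    rw [this]; omega
  have := SL hq m' 0 x hx h2
  rwa [pow_one] at this

lemma Nufin_c1 {q m : ℕ} (hq : 2 ≤ q) (hm : 1 ≤ m) : Nufin q m (gsC q m + 1) = 2 := by
  set c := gsC q m with hc
  have hfilter : (Finset.range (c+1+1)).filter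
      (fun a => a ∈ GSsemigroup q m ∧ c + 1 - a ∈ GSsemigroup q m) = {0, c+1} := by
    ext a
    simp only [Finset.mem_filter, Finset.mem_range, Finset.mem_insert, Finset.mem_singleton]
    constructor
    · rintro ⟨ha1, ha2, ha3⟩
      by_contra hcon
      push_neg at hcon
      obtain ⟨hne0, hnec⟩ := hcon
      have haint : 1 ≤ a ∧ a ≤ c := by omega
      have hc2 : 2 ≤ c := by
        rcases c_zero_or_two hq m hm with ⟨_, h0, _⟩ | ⟨_, h2⟩
        · omega
        · exact h2
      set b := c + 1 - a with hb
      have hab : a + b = c + 1 := by omega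
      have hbint : 1 ≤ b ∧ b ≤ c := by omega
      have hq1 : ¬ (q ∣ 1) := by
        intro hdvd
        have := Nat.le_of_dvd one_pos hdvd
        omega
      rcases Nat.lt_or_ge a c with hac | hac
      · have hqa : q ∣ a := q_dvd_lt_c hq hm ha2 hac
        rcases Nat.lt_or_ge b c with hbc | hbc
        · have hqb : q ∣ b := q_dvd_lt_c hq hm ha3 hbc
          have hqc : q ∣ c := q_dvd_c m hm
          have : q ∣ a + b := dvd_add hqa hqb
          rw [hab] at this
          have : q ∣ 1 := by
            have := Nat.dvd_sub this hqc
            simpa using this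
          exact hq1 this
        · -- b = c, a = 1
          have ha1' : a = 1 := by omega
          rw [ha1'] at hqa
          exact hq1 hqa
      · -- a = c, b = 1
        have hbeq : b = 1 := by omega
        have hqb : q ∣ b := q_dvd_lt_c hq hm ha3 (by omega)
        rw [hbeq] at hqb
        exact hq1 hqb
    · rintro (rfl | rfl)
      · refine ⟨by omega, zero_mem q m, ?_⟩
        rw [Nat.sub_zero]
        exact mem_of_c_le (by omega)
      · refine ⟨by omega, mem_of_c_le (by omega), ?_⟩
        rw [Nat.sub_self]
        exact zero_mem q m
  unfold Nufin
  rw [hfilter]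
  rw [Finset.card_insert_of_notMem (by simp), Finset.card_singleton]

/-- lower bound for ν at any element `l ≥ c + d` (with `d < c`). -/
lemma Nlow {q m d l : ℕ} (hm : 1 ≤ m) (hd : d + 1 ≤ gsC q m)
    (hl : gsC q m + d ≤ l) : 2 * F q m (d+1) ≤ Nufin q m l := by
  set c := gsC q m with hc
  set Small := (Finset.range (d+1)).filter (fun a => a ∈ GSsemigroup q m) with hSmall
  have hFS : F q m (d+1) = Small.card := F_eq_card q m (d+1)
  set Big := Small.image (fun s => l - s) with hBig
  have hsmall_le : ∀ a ∈ Small, a ≤ d := by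
    intro a ha
    have := (Finset.mem_filter.mp ha).1
    simp only [Finset.mem_range] at this
    omega
  have hsub : Small ∪ Big ⊆ (Finset.range (l+1)).filter
      (fun a => a ∈ GSsemigroup q m ∧ l - a ∈ GSsemigroup q m) := by
    intro a ha
    rcases Finset.mem_union.mp ha with h | h
    · have had : a ≤ d := hsmall_le a h
      have haS : a ∈ GSsemigroup q m := (Finset.mem_filter.mp h).2
      refine Finset.mem_filter.mpr ⟨Finset.mem_range.mpr (by omega), haS, ?_⟩
      exact mem_of_c_le (by omega)
    · obtain ⟨s, hs, rfl⟩ := Finset.mem_image.mp h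
      have hsd : s ≤ d := hsmall_le s hs
      have hsS : s ∈ GSsemigroup q m := (Finset.mem_filter.mp hs).2
      refine Finset.mem_filter.mpr ⟨Finset.mem_range.mpr (by omega), mem_of_c_le (by omega), ?_⟩
      have : l - (l - s) = s := by omega
      rw [this]; exact hsS
  have hinj : Set.InjOn (fun s => l - s) ↑Small := by
    intro x hx y hy hxy
    have hx' := hsmall_le x (Finset.mem_coe.mp hx)
    have hy' := hsmall_le y (Finset.mem_coe.mp hy)
    simp only at hxy
    omega
  have hdisj : Disjoint Small Big := by
    rw [Finset.disjoint_left]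
    intro x hxS hxB
    have h1 : x ≤ d := hsmall_le x hxS
    obtain ⟨s, hs, rfl⟩ := Finset.mem_image.mp hxB
    have h2 : s ≤ d := hsmall_le s hs
    omega
  calc 2 * F q m (d+1) = Small.card + Big.card := by
        rw [hFS, hBig, Finset.card_image_of_injOn hinj]; ring
    _ = (Small ∪ Big).card := (Finset.card_union_of_disjoint hdisj).symm
    _ ≤ _ := Finset.card_le_card hsub

/-- exact value of ν in the stable zone `l ≥ 2c - 1`. -/
lemma Nhigh {q m l : ℕ} (hq : 2 ≤ q) (hm : 1 ≤ m) (hl : 2 * gsC q m ≤ l + 1) :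
    Nufin q m l + 2 * gsG q m = l + 1 := by
  set c := gsC q m with hc
  set g := gsG q m with hg
  set G1 := (Finset.range (l+1)).filter (fun a => a ∉ GSsemigroup q m) with hG1
  set G2 := (Finset.range (l+1)).filter (fun a => l - a ∉ GSsemigroup q m) with hG2
  have hgap_lt : ∀ x : ℕ, x ∉ GSsemigroup q m → x < c := by
    intro x hx
    by_contra hcon
    exact hx (mem_of_c_le (by omega))
  have hsplit : Nufin q m l + ((Finset.range (l+1)).filter
      (fun a => ¬ (a ∈ GSsemigroup q m ∧ l - a ∈ GSsemigroup q m))).card = l + 1 := by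
    have h := Finset.card_filter_add_card_filter_not
      (s := Finset.range (l+1)) (p := fun a => a ∈ GSsemigroup q m ∧ l - a ∈ GSsemigroup q m)
    rw [Finset.card_range] at h
    unfold Nufin
    omega
  have hnot : (Finset.range (l+1)).filter
      (fun a => ¬ (a ∈ GSsemigroup q m ∧ l - a ∈ GSsemigroup q m)) = G1 ∪ G2 := by
    rw [hG1, hG2, ← Finset.filter_or]
    apply Finset.filter_congr
    intro x _
    constructor
    · intro h
      by_contra hcon
      push_neg at hcon
      exact h hcon
    · intro h hcon
      rcases h with h | h
      · exact h hcon.1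
      · exact h hcon.2
  have hG1g : G1.card = g := by
    have hpos := Finset.card_filter_add_card_filter_not
      (s := Finset.range (l+1)) (p := fun a => a ∈ GSsemigroup q m)
    rw [Finset.card_range] at hpos
    have hFval : F q m (l+1) + g = l + 1 := by
      have h1 : l + 1 = c + (l + 1 - c) := by omega
      rw [h1]
      exact F_c_full q hq m hm _
    have hFcard : F q m (l+1) = ((Finset.range (l+1)).filter
        (fun a => a ∈ GSsemigroup q m)).card := F_eq_card q m (l+1)
    rw [hG1]
    omega
  have hG2eq : G2 = G1.image (fun x => l - x) := by
    ext a
    simp only [hG2, hG1, Finset.mem_filter, Finset.mem_range, Finset.mem_image]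
    constructor
    · rintro ⟨ha1, ha2⟩
      exact ⟨l - a, ⟨by omega, ha2⟩, by omega⟩
    · rintro ⟨x, ⟨hx1, hx2⟩, rfl⟩
      have hxc : x < c := hgap_lt x hx2
      refine ⟨by omega, ?_⟩
      have hxx : l - (l - x) = x := by omega
      rw [hxx]; exact hx2
  have hG2card : G2.card = g := by
    rw [hG2eq, Finset.card_image_of_injOn, hG1g]
    intro x hx y hy hxy
    have hx' : x < l + 1 := by
      have := (Finset.mem_filter.mp (Finset.mem_coe.mp hx)).1
      simpa using this
    have hy' : y < l + 1 := by
      have := (Finset.mem_filter.mp (Finset.mem_coe.mp hy)).1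
      simpa using this
    simp only at hxy
    omega
  have hdisj : Disjoint G1 G2 := by
    rw [Finset.disjoint_left]
    intro x hx1 hx2
    have h1 : x < c := hgap_lt x (Finset.mem_filter.mp hx1).2
    have h2 := (Finset.mem_filter.mp hx2).2
    have h3 : l - x < c := hgap_lt _ h2
    have h4 : x < l + 1 := by
      have := (Finset.mem_filter.mp hx1).1
      simpa using this
    omega
  have hcard : (G1 ∪ G2).card = 2 * g := by
    rw [Finset.card_union_of_disjoint hdisj, hG1g, hG2card]
    ring
  rw [hnot, hcard] at hsplit
  omega

end GSaux

namespace GSaux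

/-- the witness element: ν(c - 1 + q^e·(⌊d/q^e⌋+1)) = 2·F(d+1). -/
lemma Nwitness {q u e d : ℕ} (hq : 2 ≤ q) (he : 1 ≤ e)
    (h1 : q ^ (u+e) + d < q ^ (2*u+e+1))
    (h2 : q ^ (2*u+e+1) ≤ q ^ (u+e+1) + d)
    (hd1 : 1 ≤ d) (hd2 : d + 1 ≤ gsC q (2*u+e+1)) :
    Nufin q (2*u+e+1) (gsC q (2*u+e+1) - 1 + q^e * (d / q^e + 1))
      = 2 * F q (2*u+e+1) (d+1) := by
  have hm : 1 ≤ 2*u+e+1 := by omega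
  set c := gsC q (2*u+e+1) with hc
  set K := d / q^e + 1 with hK
  set lam := c - 1 + q^e * K with hlam
  have hqe1 : 1 ≤ q ^ e := Nat.one_le_pow _ _ (by omega)
  have hdK : d < q^e * K := by
    have h := (Nat.div_lt_iff_lt_mul (show 0 < q^e by omega)).mp
      (show d / q^e < d / q^e + 1 by omega)
    have heq : (d / q^e + 1) * q^e = q^e * K := by rw [hK]; ring
    omega
  have hlam_ge : c + d ≤ lam := by omega
  -- no element of S in (d, q^e*K)
  have noS : ∀ x, x ∈ GSsemigroup q (2*u+e+1) → d < x → x < q^e * K → False := by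
    intro x hx hxd hxK
    have hpow1 : q^e * q^(2*u+1) = q^(2*u+e+1) := by rw [← pow_add]; ring_nf
    have hpow2 : q^e * q^u = q^(u+e) := by rw [← pow_add]; ring_nf
    have hT : q^e * (q^(2*u+1) - q^u) = q^(2*u+e+1) - q^(u+e) := by
      rw [Nat.mul_sub, hpow1, hpow2]
    have hdivlt : d / q^e < q^(2*u+1) - q^u := by
      rw [Nat.div_lt_iff_lt_mul (show 0 < q^e by omega)]
      have : (q^(2*u+1) - q^u) * q^e = q^e * (q^(2*u+1) - q^u) := by ring
      rw [this, hT]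
      omega
    have hKT : q^e * K ≤ q^(2*u+e+1) - q^(u+e) := by
      rw [← hT]
      exact Nat.mul_le_mul_left _ (by omega)
    have hpowle : q^(u+e) ≤ q^(2*u+e+1) := Nat.pow_le_pow_right (by omega) (by omega)
    have hxsmall : x + q^(u+e) < q^(2*u+e+1) := by omega
    have hexp : ((2*u+e) + (e-1) + 2)/2 = u+e := by omega
    have hdvd : q ^ ((e-1)+1) ∣ x := by
      apply SL hq (2*u+e) (e-1) x hx
      rw [hexp]
      exact hxsmall
    rw [show (e-1)+1 = e by omega] at hdvd
    obtain ⟨w, hw⟩ := hdvd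
    have hwK : w < K := by
      by_contra hcon
      push_neg at hcon
      have : q^e * K ≤ q^e * w := Nat.mul_le_mul_left _ hcon
      omega
    have : w ≤ d / q^e := by omega
    have : q^e * w ≤ q^e * (d / q^e) := Nat.mul_le_mul_left _ this
    have hmd : q^e * (d / q^e) ≤ d := Nat.mul_div_le d (q^e)
    omega
  -- upper bound
  have hupper : Nufin q (2*u+e+1) lam ≤ 2 * F q (2*u+e+1) (d+1) := by
    set Small := (Finset.range (d+1)).filter (fun a => a ∈ GSsemigroup q (2*u+e+1)) with hSmall
    set Big := Small.image (fun s => lam - s) with hBig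
    have hsmall_le : ∀ a ∈ Small, a ≤ d ∧ a ∈ GSsemigroup q (2*u+e+1) := by
      intro a ha
      have h := Finset.mem_filter.mp ha
      have := Finset.mem_range.mp h.1
      exact ⟨by omega, h.2⟩
    have hsub : (Finset.range (lam+1)).filter
        (fun a => a ∈ GSsemigroup q (2*u+e+1) ∧ lam - a ∈ GSsemigroup q (2*u+e+1))
        ⊆ Small ∪ Big := by
      intro a ha
      have h := Finset.mem_filter.mp ha
      have ha1 : a ≤ lam := by
        have := Finset.mem_range.mp h.1
        omega
      obtain ⟨ha2, ha3⟩ := h.2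
      have key : a ≤ d ∨ lam - a ≤ d := by
        by_contra hcon
        push_neg at hcon
        obtain ⟨hda, hdb⟩ := hcon
        rcases le_or_gt c a with hca | hca
        · exact noS (lam - a) ha3 hdb (by omega)
        rcases le_or_gt c (lam - a) with hcb | hcb
        · exact noS a ha2 hda (by omega)
        · have hqa := q_dvd_lt_c hq hm ha2 hca
          have hqb := q_dvd_lt_c hq hm ha3 hcb
          have hqlam : q ∣ lam := by
            have := dvd_add hqa hqb
            rwa [show a + (lam - a) = lam by omega] at this
          have hqc : q ∣ c := q_dvd_c _ hm
          have hqeK : q ∣ q^e * K := Dvd.dvd.mul_right (dvd_pow_self q (by omega)) K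
          have hl1 : lam + 1 = c + q^e * K := by omega
          have hq1 : q ∣ lam + 1 := by
            rw [hl1]; exact dvd_add hqc hqeK
          have : q ∣ 1 := by
            have := Nat.dvd_sub hq1 hqlam
            simpa using this
          have := Nat.le_of_dvd one_pos this
          omega
      rcases key with hkey | hkey
      · exact Finset.mem_union_left _ (Finset.mem_filter.mpr
          ⟨Finset.mem_range.mpr (by omega), ha2⟩)
      · apply Finset.mem_union_right
        rw [hBig]
        apply Finset.mem_image.mpr
        refine ⟨lam - a, Finset.mem_filter.mpr ⟨Finset.mem_range.mpr (by omega), ha3⟩, by omega⟩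
    calc Nufin q (2*u+e+1) lam ≤ (Small ∪ Big).card := Finset.card_le_card hsub
      _ ≤ Small.card + Big.card := Finset.card_union_le _ _
      _ ≤ Small.card + Small.card := by
          rw [hBig]
          have := Finset.card_image_le (s := Small) (f := fun s => lam - s)
          omega
      _ = 2 * F q (2*u+e+1) (d+1) := by
          rw [F_eq_card]
          ring
  have hlower := Nlow (q := q) hm hd2 hlam_ge
  omega

end GSaux

open GSaux

/-- the explicit formula for the order bound `δ^m_i`. -/
theorem stmt18 (q : ℕ) (hq : 2 ≤ q) (m : ℕ) (hm : 1 ≤ m) (i : ℕ) :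
    (i ≤ gsC q m - gsG q m → gsDelta q m i = 2) ∧
    (2 * gsC q m - gsG q m - 2 < i → gsDelta q m i = i - gsG q m + 2) ∧
    (gsC q m - gsG q m < i → i ≤ 2 * gsC q m - gsG q m - 2 →
      ∀ α : ℕ, α = Nat.clog q (q ^ m - i - 1 + gsC q m - gsG q m) →
        gsDelta q m i =
          2 * q ^ (m - α) + 2 * ((i + 1 + gsG q m - gsC q m) / q ^ (2 * α - m - 1)) -
            2 * gsC q (2 * m - 2 * α + 1)) := by

  have hP1 : 1 ≤ q ^ (m/2) := Nat.one_le_pow _ _ (by omega)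
  have hcg' : gsC q m + 1 = gsG q m + q ^ (m/2) := cg_identity hq m
  have henum : ∀ t : ℕ, gsEnum q m (gsC q m - gsG q m + t) = gsC q m + t := by
    intro t
    have h1 := F_c_full q hq m hm t
    have heq : F q m (gsC q m + t) = Nat.count (fun n => n ∈ GSsemigroup q m) (gsC q m + t) := rfl
    have h2 : Nat.count (fun n => n ∈ GSsemigroup q m) (gsC q m + t) = gsC q m - gsG q m + t := by
      omega
    rw [← h2]
    exact gsEnum_count (mem_of_c_le (by omega))
  set c := gsC q m with hc
  set g := gsG q m with hg
  have hcg : c + 1 = g + q ^ (m/2) := by omega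
  have hbig : (m = 1 ∧ c = 0 ∧ g = 0) ∨ (2 ≤ m ∧ 2 ≤ c ∧ 2 ≤ q ^ (m/2)) := by
    rcases c_zero_or_two hq m hm with ⟨h1, h2, h3⟩ | ⟨h1, h2⟩
    · exact Or.inl ⟨h1, h2, h3⟩
    · refine Or.inr ⟨h1, h2, ?_⟩
      calc 2 ≤ q := hq
        _ = q ^ 1 := (pow_one q).symm
        _ ≤ q ^ (m/2) := Nat.pow_le_pow_right (by omega) (by omega)
  have hgc : g ≤ c := by omega
  refine ⟨?_, ?_, ?_⟩
  · -- CASE 1 : i ≤ c - g → δ = 2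
    intro hi
    have hjval : gsEnum q m (c - g + 1) = c + 1 := henum 1
    have hnu : gsNu q m (c - g + 1) = 2 := by
      rw [gsNu_eq, hjval]
      exact Nufin_c1 hq hm
    apply le_antisymm
    · apply Nat.sInf_le
      exact ⟨c - g + 1, by simp only [Set.mem_setOf_eq]; omega, hnu⟩
    · apply le_csInf
      · exact ⟨2, ⟨c - g + 1, by simp only [Set.mem_setOf_eq]; omega, hnu⟩⟩
      · rintro v ⟨j, hj, rfl⟩
        simp only [Set.mem_setOf_eq] at hj
        rw [gsNu_eq]
        apply two_le_Nufin _ (gsEnum_mem q m j)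
        have h1 : j ≤ gsEnum q m j := (gsEnum_strictMono q m).le_apply
        omega
  · -- CASE 2 : 2c - g - 2 < i → δ = i - g + 2
    intro hi
    have hidx : ∀ j, i < j → gsEnum q m j = j + g := by
      intro j hj
      obtain ⟨t, ht⟩ : ∃ t, j = c - g + t := ⟨j - (c - g), by omega⟩
      rw [ht, henum t]
      omega
    have hnu : ∀ j, i < j → gsNu q m j + 2 * g = j + g + 1 := by
      intro j hj
      rw [gsNu_eq, hidx j hj]
      exact Nhigh hq hm (by omega)
    apply le_antisymm
    · apply Nat.sInf_le
      refine ⟨i + 1, by simp only [Set.mem_setOf_eq]; omega, ?_⟩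
      have := hnu (i+1) (by omega)
      omega
    · apply le_csInf
      · refine ⟨gsNu q m (i+1), ⟨i + 1, by simp only [Set.mem_setOf_eq]; omega, rfl⟩⟩
      · rintro v ⟨j, hj, rfl⟩
        simp only [Set.mem_setOf_eq] at hj
        have := hnu j hj
        omega
  · -- CASE 3 : middle
    intro h3a h3b α hα
    -- m = 1 is impossible
    have hm2 : 2 ≤ m ∧ 2 ≤ c ∧ 2 ≤ q ^ (m/2) := by
      rcases hbig with ⟨_, h2, h3⟩ | h
      · omega
      · exact h
    set d := i + 1 + g - c with hd
    have hd1 : 1 ≤ d := by omega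
    have hd2 : d + 1 ≤ c := by omega
    -- powers
    have hqh : q ^ ((m+1)/2) ≤ q ^ m := Nat.pow_le_pow_right (by omega) (by omega)
    have hqm : c + q ^ ((m+1)/2) = q ^ m := by
      rw [hc]
      unfold gsC
      omega
    have hPh : q ^ (m/2) ≤ q ^ ((m+1)/2) := Nat.pow_le_pow_right (by omega) (by omega)
    have hqh2 : 2 ≤ q ^ ((m+1)/2) := by
      calc 2 ≤ q := hq
        _ = q ^ 1 := (pow_one q).symm
        _ ≤ q ^ ((m+1)/2) := Nat.pow_le_pow_right (by omega) (by omega)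
    have hiq : i + 1 + 1 ≤ q ^ m := by omega
    have hNeq : q ^ m - i - 1 + c - g = q ^ m - d := by omega
    rw [hNeq] at hα
    have hn2 : 2 ≤ q ^ m - d := by omega
    have hα2 : q ^ m - d ≤ q ^ α := by rw [hα]; exact Nat.le_pow_clog (by omega) _
    have hα1 : q ^ (α - 1) < q ^ m - d := by
      rw [hα]; exact Nat.pow_pred_clog_lt_self (by omega) hn2
    have hαm : α ≤ m := by
      have h1 : q ^ (α - 1) < q ^ m := by omega
      have := (Nat.pow_lt_pow_iff_right (show 1 < q by omega)).mp h1
      -- α - 1 < m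
      rcases Nat.eq_zero_or_pos α with h | h
      · omega
      · omega
    have hα_lb : (m+1)/2 < α := by
      have h1 : q ^ ((m+1)/2) < q ^ m - d := by omega
      have h2 : q ^ ((m+1)/2) < q ^ α := by omega
      exact (Nat.pow_lt_pow_iff_right (show 1 < q by omega)).mp h2
    set u := m - α with hu
    set e := 2 * α - m - 1 with he
    have he1 : 1 ≤ e := by omega
    have hue : m = 2 * u + e + 1 := by omega
    have hαue : α = u + e + 1 := by omega
    have hpm : q ^ m = q ^ (2*u+e+1) := by rw [← hue]
    have hp1 : q ^ (α - 1) = q ^ (u+e) := by rw [show α - 1 = u + e by omega]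
    have hp2 : q ^ α = q ^ (u+e+1) := by rw [hαue]
    have h1 : q ^ (u+e) + d < q ^ (2*u+e+1) := by omega
    have h2 : q ^ (2*u+e+1) ≤ q ^ (u+e+1) + d := by omega
    have hclevel : gsC q (2*u+e+1) = c := by rw [← hue]
    have hd2' : d + 1 ≤ gsC q (2*u+e+1) := by omega
    -- the dagger identity
    have hdag := dag hq e u d h1 h2
    -- the witness
    have hwit := Nwitness hq he1 h1 h2 hd1 hd2'
    rw [hclevel] at hwit
    have hFlevel : F q (2*u+e+1) (d+1) = F q m (d+1) := by rw [← hue]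
    rw [hFlevel] at hwit hdag
    rw [show 2*u+e+1 = m from hue.symm] at hwit
    set lam := c - 1 + q ^ e * (d / q ^ e + 1) with hlam
    have hqe1 : 1 ≤ q ^ e := Nat.one_le_pow _ _ (by omega)
    have hdK : d < q ^ e * (d / q ^ e + 1) := by
      have h := (Nat.div_lt_iff_lt_mul (show 0 < q^e by omega)).mp
        (show d / q^e < d / q^e + 1 by omega)
      have heq : (d / q^e + 1) * q^e = q^e * (d / q^e + 1) := by ring
      omega
    have hlamS : lam ∈ GSsemigroup q m := mem_of_c_le (by omega)
    set jstar := Nat.count (fun n => n ∈ GSsemigroup q m) lam with hjstar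
    have hjval : gsEnum q m jstar = lam := gsEnum_count hlamS
    have hival : gsEnum q m (i+1) = c + d := by
      obtain ⟨t, ht⟩ : ∃ t, i + 1 = c - g + t := ⟨i + 1 - (c - g), by omega⟩
      rw [ht, henum t]
      omega
    have hjgt : i < jstar := by
      have hle : gsEnum q m (i+1) ≤ gsEnum q m jstar := by
        rw [hjval, hival]; omega
      have := (gsEnum_strictMono q m).le_iff_le.mp hle
      omega
    have hnuj : gsNu q m jstar = 2 * F q m (d+1) := by
      rw [gsNu_eq, hjval]
      exact hwit
    have hdelta : gsDelta q m i = 2 * F q m (d+1) := by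
      apply le_antisymm
      · exact Nat.sInf_le ⟨jstar, by simp only [Set.mem_setOf_eq]; omega, hnuj⟩
      · apply le_csInf
        · exact ⟨gsNu q m jstar, ⟨jstar, by simp only [Set.mem_setOf_eq]; omega, rfl⟩⟩
        · rintro v ⟨j, hj, rfl⟩
          simp only [Set.mem_setOf_eq] at hj
          rw [gsNu_eq]
          apply Nlow hm hd2
          have hle : gsEnum q m (i+1) ≤ gsEnum q m j :=
            (gsEnum_strictMono q m).monotone (by omega)
          rw [hival] at hle
          exact hle
    rw [hdelta]
    rw [show 2 * m - 2 * α + 1 = 2 * u + 1 by omega]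
    omega
end

section
/- For m ≥ 1, ν^m_{c_m − g_m + 1} = 2, where ν^m is the ν-sequence of Λ^m; hence δ^m_i = 2 for all i ≤ c_m − g_m. -/
lemma gs_mem_iff (q m x : ℕ) : x ∈ GSsemigroup q (m+2) ↔
    (∃ y ∈ GSsemigroup q (m+1), q*y = x) ∨ gsC q (m+2) ≤ x := by
  have h : (m + 2 + 1) / 2 = (m+3)/2 := by omega
  simp [GSsemigroup, gsC, h, Set.mem_image, Set.mem_setOf_eq]

lemma gs_zero_mem (q : ℕ) : ∀ m, 0 ∈ GSsemigroup q m
  | 0 => trivial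
  | 1 => trivial
  | (m+2) => (gs_mem_iff q m 0).2 (Or.inl ⟨0, gs_zero_mem q (m+1), by simp⟩)

lemma gs_conductor_mem (q : ℕ) : ∀ m n, gsC q m ≤ n → n ∈ GSsemigroup q m
  | 0, n, _ => trivial
  | 1, n, _ => trivial
  | (m+2), n, h => (gs_mem_iff q m n).2 (Or.inr h)

lemma gs_C_ge (q : ℕ) (hq : 2 ≤ q) (m : ℕ) : q ^ (m+1) ≤ gsC q (m+2) := by
  have h1 : (m + 2 + 1) / 2 ≤ m + 1 := by omega
  have h2 : q ^ ((m + 2 + 1) / 2) ≤ q ^ (m+1) := Nat.pow_le_pow_right (by omega) h1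
  have h3 : 2 * q ^ (m+1) ≤ q ^ (m+2) := by
    have : q ^ (m+2) = q * q ^ (m+1) := by ring
    rw [this]; exact Nat.mul_le_mul_right _ hq
  unfold gsC; omega

lemma gs_two_le (q : ℕ) (hq : 2 ≤ q) (m x : ℕ) (hx : x ∈ GSsemigroup q (m+2)) (hx0 : x ≠ 0) :
    2 ≤ x := by
  rcases (gs_mem_iff q m x).1 hx with ⟨y, _, rfl⟩ | h
  · have : 1 ≤ y := Nat.pos_of_ne_zero (by rintro rfl; simp at hx0)
    calc 2 = 2 * 1 := by ring
    _ ≤ q * y := Nat.mul_le_mul hq this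
  · have := gs_C_ge q hq m
    have h4 : 2 ≤ q ^ (m+1) := le_trans hq (Nat.le_self_pow (by omega) q)
    omega

lemma gs_dvd_C (q : ℕ) (m : ℕ) : q ∣ gsC q (m+2) :=
  Nat.dvd_sub (dvd_pow_self q (by omega)) (dvd_pow_self q (by omega))

lemma gs_dvd_of_lt (q m x : ℕ) (hx : x ∈ GSsemigroup q (m+2)) (h : x < gsC q (m+2)) :
    q ∣ x := by
  rcases (gs_mem_iff q m x).1 hx with ⟨y, _, rfl⟩ | h'
  · exact Dvd.intro y rfl
  · omega

lemma gs_decomp (q : ℕ) (hq : 2 ≤ q) :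
    ∀ m, 1 ≤ m → ∀ x y : ℕ, x ∈ GSsemigroup q m → y ∈ GSsemigroup q m →
      x + y = gsC q m + 1 → x = 0 ∨ y = 0
  | 1, _, x, y, _, _, hxy => by
      have : gsC q 1 = 0 := by simp [gsC]
      omega
  | (m+2), _, x, y, hx, hy, hxy => by
      by_contra hc
      push_neg at hc
      have hx2 := gs_two_le q hq m x hx hc.1
      have hy2 := gs_two_le q hq m y hy hc.2
      have hC2 : 2 ≤ gsC q (m+2) :=
        le_trans (le_trans hq (Nat.le_self_pow (by omega) q)) (gs_C_ge q hq m)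
      have hxlt : x < gsC q (m+2) := by omega
      have hylt : y < gsC q (m+2) := by omega
      have dx := gs_dvd_of_lt q m x hx hxlt
      have dy := gs_dvd_of_lt q m y hy hylt
      have dC := gs_dvd_C q m
      have : q ∣ 1 := by
        have h1 : q ∣ x + y := Nat.dvd_add dx dy
        rw [hxy] at h1
        exact (Nat.dvd_add_right dC).1 h1
      have := Nat.le_of_dvd one_pos this
      omega
lemma gs_arith (q a b e Q : ℕ) (ha : 1 ≤ a) (hab2 : a ≤ b) (hbe2 : b ≤ e)
    (hab : a*b = Q) (hbe : b*e = q*Q) :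
    ((Q - a) - (Q - b)) + ((Q - b) - (b-1)*(a-1)) = (q*Q - e) - (e-1)*(b-1) := by
  have hb : 1 ≤ b := le_trans ha hab2
  have he : 1 ≤ e := le_trans hb hbe2
  have hbQ : b ≤ Q := by
    calc b = 1*b := (one_mul b).symm
    _ ≤ a*b := Nat.mul_le_mul_right b ha
    _ = Q := hab
  have haQ : a ≤ Q := le_trans hab2 hbQ
  have heQ : e ≤ q*Q := by
    calc e = 1*e := (one_mul e).symm
    _ ≤ b*e := Nat.mul_le_mul_right e hb
    _ = q*Q := hbe
  have hsub : Q - b ≤ Q - a := Nat.sub_le_sub_left hab2 Q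
  have h1 : (b-1)*(a-1) ≤ Q - b := by zify [ha, hb, hbQ]; nlinarith [hab]
  have h2 : (e-1)*(b-1) ≤ q*Q - e := by zify [hb, he, heQ]; nlinarith [hbe]
  zify [ha, hb, he, haQ, hbQ, heQ, hsub, h1, h2]
  have habZ : (a:ℤ)*b = Q := by exact_mod_cast hab
  have hbeZ : (b:ℤ)*e = q*Q := by exact_mod_cast hbe
  linarith [habZ, hbeZ]

open Classical in
lemma gs_count (q : ℕ) (hq : 2 ≤ q) :
    ∀ m, Nat.count (· ∈ GSsemigroup q (m+1)) (gsC q (m+1)) = gsC q (m+1) - gsG q (m+1) := by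
  intro m
  induction m with
  | zero =>
    have h : gsC q 1 = 0 := by simp [gsC]
    rw [h, Nat.count_zero]; omega
  | succ m ih =>
    have hq0 : 0 < q := by omega
    set a := q^((m+1)/2) with ha_def
    set b := q^((m+2)/2) with hb_def
    set e := q^((m+3)/2) with he_def
    set Q := q^(m+1) with hQ_def
    have ha : 1 ≤ a := Nat.one_le_pow _ _ hq0
    have hab2 : a ≤ b := Nat.pow_le_pow_right hq0 (by omega)
    have hbe2 : b ≤ e := Nat.pow_le_pow_right hq0 (by omega)
    have hab : a*b = Q := by
      rw [ha_def, hb_def, hQ_def, ← pow_add]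
      try congr 1
      all_goals omega
    have hbe : b*e = q*Q := by
      rw [hb_def, he_def, hQ_def, ← pow_add, ← pow_succ']
      try congr 1
      all_goals omega
    have hC : gsC q (m+2) = q*Q - e := by
      rw [gsC, hQ_def, he_def, ← pow_succ']
      try congr 2
      all_goals omega
    have hc : gsC q (m+1) = Q - b := by rw [gsC, hQ_def, hb_def]
    have hG : gsG q (m+2) = (e-1)*(b-1) := by
      rw [gsG, he_def, hb_def]
      try congr 3
      all_goals omega
    have hg : gsG q (m+1) = (b-1)*(a-1) := by
      rw [gsG, hb_def, ha_def]
      try congr 3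
      all_goals omega
    have hea : e = q * a := by
      rw [he_def, ha_def, show (m+3)/2 = (m+1)/2 + 1 from by omega, pow_succ']
    have hCD : gsC q (m+2) = q * (Q - a) := by rw [hC, Nat.mul_sub, ← hea]
    have hcD : gsC q (m+1) ≤ Q - a := by
      rw [hc]; exact Nat.sub_le_sub_left hab2 Q
    -- Step A: bijection with multiples of q
    have stepA : Nat.count (· ∈ GSsemigroup q (m+2)) (gsC q (m+2))
        = Nat.count (· ∈ GSsemigroup q (m+1)) (Q - a) := by
      rw [Nat.count_eq_card_filter_range, Nat.count_eq_card_filter_range]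
      have himg : (Finset.range (gsC q (m+2))).filter (fun x => x ∈ GSsemigroup q (m+2))
          = ((Finset.range (Q - a)).filter (fun y => y ∈ GSsemigroup q (m+1))).image
              (fun y => q * y) := by
        ext x
        simp only [Finset.mem_image, Finset.mem_filter, Finset.mem_range]
        constructor
        · rintro ⟨hlt, hmem⟩
          rcases (gs_mem_iff q m x).1 hmem with ⟨y, hy, rfl⟩ | hge
          · refine ⟨y, ⟨?_, hy⟩, rfl⟩
            rw [hCD] at hlt
            exact lt_of_mul_lt_mul_left hlt (le_of_lt hq0)
          · omega
        · rintro ⟨y, ⟨hylt, hy⟩, rfl⟩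
          refine ⟨?_, (gs_mem_iff q m _).2 (Or.inl ⟨y, hy, rfl⟩)⟩
          rw [hCD]
          exact (Nat.mul_lt_mul_left hq0).2 hylt
      rw [himg, Finset.card_image_of_injective _ fun u v h => by
        exact Nat.eq_of_mul_eq_mul_left hq0 h]
    -- Step B: split range at the conductor
    have stepB : Nat.count (· ∈ GSsemigroup q (m+1)) (Q - a)
        = ((Q - a) - gsC q (m+1)) + Nat.count (· ∈ GSsemigroup q (m+1)) (gsC q (m+1)) := by
      rw [Nat.count_eq_card_filter_range, Nat.count_eq_card_filter_range]
      rw [Finset.range_eq_Ico, ← Finset.Ico_union_Ico_eq_Ico (Nat.zero_le _) hcD,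
        Finset.filter_union]
      rw [Finset.card_union_of_disjoint]
      · have : (Finset.Ico (gsC q (m+1)) (Q - a)).filter (fun y => y ∈ GSsemigroup q (m+1))
            = Finset.Ico (gsC q (m+1)) (Q - a) := by
          apply Finset.filter_true_of_mem
          intro x hx
          exact gs_conductor_mem q (m+1) x (Finset.mem_Ico.1 hx).1
        rw [this, Nat.card_Ico, ← Finset.range_eq_Ico]
        omega
      · exact Finset.disjoint_filter_filter
          (Finset.Ico_disjoint_Ico_consecutive 0 (gsC q (m+1)) (Q - a))
    rw [stepA, stepB, ih, hC, hG, hc, hg]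
    exact gs_arith q a b e Q ha hab2 hbe2 hab hbe


open Classical in
/-- `ν^m_{c_m - g_m + 1} = 2`, hence `δ^m_i = 2` for all `i ≤ c_m - g_m`. -/
theorem stmt19 (q : ℕ) (hq : 2 ≤ q) (m : ℕ) (hm : 1 ≤ m) :
    gsNu q m (gsC q m - gsG q m + 1) = 2 ∧
    ∀ i : ℕ, i ≤ gsC q m - gsG q m → gsDelta q m i = 2 := by
  obtain ⟨k, rfl⟩ : ∃ k, m = k + 1 := ⟨m - 1, by omega⟩
  set p : ℕ → Prop := fun n => n ∈ GSsemigroup q (k+1) with hp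
  have hinf : (setOf p).Infinite := by
    have hsub : Set.Ici (gsC q (k+1)) ⊆ setOf p :=
      fun x hx => gs_conductor_mem q (k+1) x hx
    exact (Set.Ici_infinite _).mono hsub
  have hsm : StrictMono (gsEnum q (k+1)) := Nat.nth_strictMono hinf
  have hmem : ∀ n, gsEnum q (k+1) n ∈ GSsemigroup q (k+1) :=
    Nat.nth_mem_of_infinite hinf
  have hl0 : gsEnum q (k+1) 0 = 0 := by
    have h := Nat.nth_count (p := p) (n := 0) (gs_zero_mem q (k+1))
    rwa [Nat.count_zero] at h
  set c := gsC q (k+1) with hc_def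
  set g := gsG q (k+1) with hg_def
  have hcount : Nat.count p c = c - g := gs_count q hq k
  have hcount1 : Nat.count p (c+1) = c - g + 1 := by
    rw [Nat.count_succ, if_pos (gs_conductor_mem q (k+1) c le_rfl), hcount]
  have hlI : gsEnum q (k+1) (c - g + 1) = c + 1 := by
    have h := Nat.nth_count (p := p) (n := c+1)
      (gs_conductor_mem q (k+1) (c+1) (by omega))
    rwa [hcount1] at h
  have part1 : gsNu q (k+1) (c - g + 1) = 2 := by
    have hset : {j : ℕ | ∃ a ∈ GSsemigroup q (k+1),
        gsEnum q (k+1) j + a = gsEnum q (k+1) (c - g + 1)} = {0, c - g + 1} := by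
      ext j
      simp only [Set.mem_setOf_eq, Set.mem_insert_iff, Set.mem_singleton_iff]
      constructor
      · rintro ⟨a, haM, hsum⟩
        rw [hlI] at hsum
        rcases gs_decomp q hq (k+1) (by omega) _ a (hmem j) haM hsum with h0 | h0
        · left
          apply hsm.injective
          rw [h0, hl0]
        · right
          apply hsm.injective
          rw [hlI]
          omega
      · rintro (rfl | rfl)
        · exact ⟨c+1, gs_conductor_mem q (k+1) _ (by omega), by rw [hl0, hlI]; omega⟩
        · exact ⟨0, gs_zero_mem q (k+1), by rw [hlI]⟩
    rw [gsNu, hset]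
    exact Set.ncard_pair (by omega)
  refine ⟨part1, ?_⟩
  have hnu2 : ∀ j, 1 ≤ j → 2 ≤ gsNu q (k+1) j := by
    intro j hj
    have hfin : {j' : ℕ | ∃ a ∈ GSsemigroup q (k+1),
        gsEnum q (k+1) j' + a = gsEnum q (k+1) j}.Finite := by
      apply Set.Finite.subset (Set.finite_Iic j)
      rintro j' ⟨a, _, hsum⟩
      have h1 : gsEnum q (k+1) j' ≤ gsEnum q (k+1) j := by omega
      exact hsm.le_iff_le.1 h1
    have hsub : ({0, j} : Set ℕ) ⊆ {j' : ℕ | ∃ a ∈ GSsemigroup q (k+1),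
        gsEnum q (k+1) j' + a = gsEnum q (k+1) j} := by
      rintro x (rfl | rfl)
      · exact ⟨gsEnum q (k+1) j, hmem j, by rw [hl0]; omega⟩
      · exact ⟨0, gs_zero_mem q (k+1), by omega⟩
    calc 2 = ({0, j} : Set ℕ).ncard := (Set.ncard_pair (by omega)).symm
    _ ≤ _ := Set.ncard_le_ncard hsub hfin
  intro i hi
  rw [gsDelta]
  have hmem2 : 2 ∈ gsNu q (k+1) '' {j : ℕ | i < j} :=
    ⟨c - g + 1, by simpa using by omega, part1⟩
  refine le_antisymm (Nat.sInf_le hmem2) ?_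
  obtain ⟨j, hji, hj⟩ := Nat.sInf_mem (⟨2, hmem2⟩ : (gsNu q (k+1) '' {j : ℕ | i < j}).Nonempty)
  rw [← hj]
  exact hnu2 j (by simp only [Set.mem_setOf_eq] at hji; omega)
end
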